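/- arXiv:2508.04741 — 2 statements merged into one kernel-verified Lean document; each statement's English description precedes it below -/
import Mathlib

section
/- (Moore's bound for simplicial complexes.) Let n, d be positive integers with d + 1 ≤ n, let X^d be a set of (d+1)-element subsets of {1,…,n}, and suppose the adjacency graph G is connected and every (d−1)-simplex has degree exactly r, where r ≥ 2 and (r−1)·d ≥ 2. If D is the diameter of G, then the number N = C(n,d) of (d−1)-simplices satisfies N ≤ 1 + r·d·(((r−1)·d)^{D} − 1)/((r−1)·d − 1). -/
/-- The adjacency graph of the pair `(X_{d-1}, X^d)`: vertices are the `d`-element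
subsets of `Fin n` (the `(d-1)`-simplices), and two distinct vertices are adjacent
iff their union belongs to `Xd`. -/
def simGraph (n d : ℕ) (Xd : Finset (Finset (Fin n))) :
    SimpleGraph {s : Finset (Fin n) // s.card = d} where
  Adj σ τ := σ ≠ τ ∧ σ.val ∪ τ.val ∈ Xd
  symm := ⟨fun σ τ ⟨h1, h2⟩ => ⟨h1.symm, by rwa [Finset.union_comm]⟩⟩
  loopless := ⟨fun σ ⟨h, _⟩ => h rfl⟩

/-- The degree of a `(d-1)`-simplex: the number of `d`-simplices in `Xd` containing it. -/
def simDegree (n d : ℕ) (Xd : Finset (Finset (Fin n)))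
    (σ : {s : Finset (Fin n) // s.card = d}) : ℕ :=
  (Xd.filter (fun t => σ.val ⊆ t)).card

private lemma aux_subset_card {n d : ℕ} (ρ : {s : Finset (Fin n) // s.card = d})
    {t : Finset (Fin n)} (ht : t.card = d + 1) (hρt : ρ.val ⊆ t) :
    (Finset.univ.filter (fun τ : {s : Finset (Fin n) // s.card = d} =>
      τ.val ⊆ t ∧ τ ≠ ρ)).card ≤ d := by
  classical
  have h1 : (Finset.univ.filter (fun τ : {s : Finset (Fin n) // s.card = d} =>
      τ.val ⊆ t ∧ τ ≠ ρ)).card ≤ ((t.powersetCard d).erase ρ.val).card := by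
    apply Finset.card_le_card_of_injOn Subtype.val
    · intro τ hτ
      rw [Finset.mem_coe, Finset.mem_filter] at hτ
      rw [Finset.mem_coe, Finset.mem_erase, Finset.mem_powersetCard]
      exact ⟨fun h => hτ.2.2 (Subtype.ext h), hτ.2.1, τ.2⟩
    · intro a _ b _ h
      exact Subtype.ext h
  have hmem : ρ.val ∈ t.powersetCard d := Finset.mem_powersetCard.mpr ⟨hρt, ρ.2⟩
  rw [Finset.card_erase_of_mem hmem, Finset.card_powersetCard, ht,
    Nat.choose_succ_self_right] at h1
  omega

private lemma aux_count {n d : ℕ} {Xd : Finset (Finset (Fin n))}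
    (hXd : ∀ s ∈ Xd, s.card = d + 1)
    (ρ : {s : Finset (Fin n) // s.card = d}) (B : Finset (Finset (Fin n)))
    (hB : ∀ t ∈ B, t ∈ Xd ∧ ρ.val ⊆ t)
    (F : Finset {s : Finset (Fin n) // s.card = d})
    (hF : ∀ τ ∈ F, τ ≠ ρ ∧ ρ.val ∪ τ.val ∈ B) :
    F.card ≤ B.card * d := by
  classical
  have hsub : F ⊆ B.biUnion (fun t => Finset.univ.filter
      (fun τ : {s : Finset (Fin n) // s.card = d} => τ.val ⊆ t ∧ τ ≠ ρ)) := by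
    intro τ hτ
    obtain ⟨hne, hmem⟩ := hF τ hτ
    rw [Finset.mem_biUnion]
    exact ⟨_, hmem, by simp [Finset.mem_filter, Finset.subset_union_right, hne]⟩
  calc F.card ≤ _ := Finset.card_le_card hsub
    _ ≤ ∑ t ∈ B, (Finset.univ.filter (fun τ : {s : Finset (Fin n) // s.card = d} =>
          τ.val ⊆ t ∧ τ ≠ ρ)).card := Finset.card_biUnion_le
    _ ≤ ∑ _t ∈ B, d := Finset.sum_le_sum (fun t ht =>
        aux_subset_card ρ (hXd t (hB t ht).1) (hB t ht).2)
    _ = B.card * d := by rw [Finset.sum_const, smul_eq_mul]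

private lemma aux_pred {α : Type*} {G : SimpleGraph α} (hc : G.Connected) (σ₀ τ : α) (k : ℕ)
    (h : G.dist σ₀ τ = k + 1) : ∃ ρ, G.Adj ρ τ ∧ G.dist σ₀ ρ = k := by
  obtain ⟨p, hp⟩ := hc.exists_walk_length_eq_dist τ σ₀
  have hne : τ ≠ σ₀ := by
    intro he
    rw [he, SimpleGraph.dist_self] at h
    omega
  obtain ⟨w, hadj, p', rfl⟩ := p.exists_eq_cons_of_ne hne
  have hlen : p'.length = k := by
    have := hp
    rw [SimpleGraph.Walk.length_cons] at this
    have hcomm : G.dist τ σ₀ = k + 1 := by rw [SimpleGraph.dist_comm]; exact h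
    omega
  refine ⟨w, hadj.symm, le_antisymm ?_ ?_⟩
  · have := SimpleGraph.dist_le p'.reverse
    rwa [SimpleGraph.Walk.length_reverse, hlen] at this
  · have h2 := hc.dist_triangle (u := σ₀) (v := w) (w := τ)
    have h3 : G.dist w τ = 1 := SimpleGraph.dist_eq_one_iff_adj.mpr hadj.symm
    omega

theorem stmt2 (n d r : ℕ) (hd : 0 < d) (hn : d + 1 ≤ n) (hr : 2 ≤ r)
    (hrd : 2 ≤ (r - 1) * d)
    (Xd : Finset (Finset (Fin n))) (hXd : ∀ s ∈ Xd, s.card = d + 1)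
    (hconn : (simGraph n d Xd).Connected)
    (hreg : ∀ σ, simDegree n d Xd σ = r)
    (D : ℕ) (hD : D = (simGraph n d Xd).diam) :
    ((n.choose d : ℝ)) ≤
      1 + (r : ℝ) * d * ((((r : ℝ) - 1) * d) ^ D - 1) / (((r : ℝ) - 1) * d - 1) := by
  classical
  set G := simGraph n d Xd with hG
  obtain ⟨σ₀⟩ := hconn.nonempty
  set q : ℕ := (r - 1) * d with hq
  set S : ℕ → Finset {s : Finset (Fin n) // s.card = d} :=
    fun k => Finset.univ.filter (fun τ => G.dist σ₀ τ = k) with hS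
  have hdeg : ∀ ρ : {s : Finset (Fin n) // s.card = d},
      (Xd.filter (fun t => ρ.val ⊆ t)).card = r := fun ρ => hreg ρ
  -- sphere 1 bound
  have hS1 : (S 1).card ≤ r * d := by
    have key := aux_count hXd σ₀ (Xd.filter (fun t => σ₀.val ⊆ t))
      (fun t ht => by rw [Finset.mem_filter] at ht; exact ⟨ht.1, ht.2⟩) (S 1) ?_
    · rwa [hdeg σ₀] at key
    · intro τ hτ
      simp only [hS, Finset.mem_filter, Finset.mem_univ, true_and] at hτ
      have hadj : G.Adj σ₀ τ := SimpleGraph.dist_eq_one_iff_adj.mp hτ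
      refine ⟨(show σ₀ ≠ τ ∧ σ₀.val ∪ τ.val ∈ Xd from hadj).1.symm, ?_⟩
      rw [Finset.mem_filter]
      exact ⟨(show σ₀ ≠ τ ∧ σ₀.val ∪ τ.val ∈ Xd from hadj).2, Finset.subset_union_left⟩
  -- sphere step bound
  have hstep : ∀ k, 1 ≤ k → (S (k + 1)).card ≤ q * (S k).card := by
    intro k hk
    have hsub : S (k + 1) ⊆ (S k).biUnion (fun ρ => Finset.univ.filter
        (fun τ => G.Adj ρ τ ∧ G.dist σ₀ τ = k + 1)) := by
      intro τ hτ
      simp only [hS, Finset.mem_filter, Finset.mem_univ, true_and] at hτ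
      obtain ⟨ρ, hρadj, hρd⟩ := aux_pred hconn σ₀ τ k hτ
      rw [Finset.mem_biUnion]
      refine ⟨ρ, ?_, ?_⟩
      · simp only [hS, Finset.mem_filter, Finset.mem_univ, true_and]; exact hρd
      · simp only [Finset.mem_filter, Finset.mem_univ, true_and]; exact ⟨hρadj, hτ⟩
    calc (S (k + 1)).card ≤ _ := Finset.card_le_card hsub
      _ ≤ ∑ ρ ∈ S k, (Finset.univ.filter
          (fun τ => G.Adj ρ τ ∧ G.dist σ₀ τ = k + 1)).card := Finset.card_biUnion_le
      _ ≤ ∑ _ρ ∈ S k, q := ?_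
      _ = q * (S k).card := by rw [Finset.sum_const, smul_eq_mul, Nat.mul_comm]
    apply Finset.sum_le_sum
    intro ρ hρ
    have hρd : G.dist σ₀ ρ = k := by
      simpa only [hS, Finset.mem_filter, Finset.mem_univ, true_and] using hρ
    have hρd' : G.dist σ₀ ρ = (k - 1) + 1 := by omega
    obtain ⟨π, hπadj, hπd⟩ := aux_pred hconn σ₀ ρ (k - 1) hρd'
    have ht₀X : π.val ∪ ρ.val ∈ Xd := (show π ≠ ρ ∧ π.val ∪ ρ.val ∈ Xd from hπadj).2
    have hρt₀ : ρ.val ⊆ π.val ∪ ρ.val := Finset.subset_union_right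
    have ht₀mem : π.val ∪ ρ.val ∈ Xd.filter (fun t => ρ.val ⊆ t) :=
      Finset.mem_filter.mpr ⟨ht₀X, hρt₀⟩
    have key := aux_count hXd ρ ((Xd.filter (fun t => ρ.val ⊆ t)).erase (π.val ∪ ρ.val)) ?_
      (Finset.univ.filter (fun τ => G.Adj ρ τ ∧ G.dist σ₀ τ = k + 1)) ?_
    · rwa [Finset.card_erase_of_mem ht₀mem, hdeg ρ] at key
    · intro t ht
      rw [Finset.mem_erase, Finset.mem_filter] at ht
      exact ⟨ht.2.1, ht.2.2⟩
    · intro τ hτ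
      rw [Finset.mem_filter] at hτ
      obtain ⟨-, hadj, hτd⟩ := hτ
      refine ⟨(show ρ ≠ τ ∧ ρ.val ∪ τ.val ∈ Xd from hadj).1.symm, ?_⟩
      rw [Finset.mem_erase, Finset.mem_filter]
      refine ⟨?_, (show ρ ≠ τ ∧ ρ.val ∪ τ.val ∈ Xd from hadj).2, Finset.subset_union_left⟩
      -- ρ.val ∪ τ.val ≠ π.val ∪ ρ.val
      intro heq
      have hτsub : τ.val ⊆ π.val ∪ ρ.val := heq ▸ Finset.subset_union_right
      by_cases hτπ : τ = π
      · rw [hτπ] at hτd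
        omega
      · -- π ∪ τ = t₀, so π adjacent to τ
        have hvne : τ.val ≠ π.val := fun h => hτπ (Subtype.ext h)
        have hnsub : ¬ τ.val ⊆ π.val := by
          intro hsub
          exact hvne (Finset.eq_of_subset_of_card_le hsub (by rw [τ.2, π.2]))
        obtain ⟨x, hxτ, hxπ⟩ := Set.not_subset.mp (by exact_mod_cast hnsub)
        have hins : insert x π.val ⊆ π.val ∪ τ.val := by
          intro y hy
          rw [Finset.mem_insert] at hy
          rcases hy with rfl | hy
          · exact Finset.mem_union_right _ hxτ
          · exact Finset.mem_union_left _ hy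
        have hcard : d + 1 ≤ (π.val ∪ τ.val).card := by
          have := Finset.card_le_card hins
          rwa [Finset.card_insert_of_notMem hxπ, π.2] at this
        have hsub2 : π.val ∪ τ.val ⊆ π.val ∪ ρ.val :=
          Finset.union_subset Finset.subset_union_left hτsub
        have heq2 : π.val ∪ τ.val = π.val ∪ ρ.val :=
          Finset.eq_of_subset_of_card_le hsub2 (by rw [hXd _ ht₀X]; exact hcard)
        have hadjπτ : G.Adj π τ := show π ≠ τ ∧ π.val ∪ τ.val ∈ Xd from ⟨Ne.symm hτπ, heq2 ▸ ht₀X⟩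
        have h2 := hconn.dist_triangle (u := σ₀) (v := π) (w := τ)
        have h3 : G.dist π τ = 1 := SimpleGraph.dist_eq_one_iff_adj.mpr hadjπτ
        omega
  -- sphere k+1 explicit bound
  have hsphere : ∀ j, (S (j + 1)).card ≤ r * d * q ^ j := by
    intro j
    induction j with
    | zero => simpa using hS1
    | succ j ih =>
      calc (S (j + 1 + 1)).card ≤ q * (S (j + 1)).card := hstep (j + 1) (by omega)
        _ ≤ q * (r * d * q ^ j) := Nat.mul_le_mul_left q ih
        _ = r * d * q ^ (j + 1) := by ring
  -- S 0 bound
  have hS0 : (S 0).card ≤ 1 := by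
    have : S 0 ⊆ {σ₀} := by
      intro τ hτ
      simp only [hS, Finset.mem_filter, Finset.mem_univ, true_and] at hτ
      rw [Finset.mem_singleton]
      exact (hconn.dist_eq_zero_iff.mp hτ).symm
    simpa using Finset.card_le_card this
  -- every vertex within distance D
  haveI : Nonempty {s : Finset (Fin n) // s.card = d} := ⟨σ₀⟩
  have hediam : G.ediam ≠ ⊤ := by
    obtain ⟨u, v, huv⟩ := SimpleGraph.exists_edist_eq_ediam_of_finite (G := G)
    rw [← huv]
    exact SimpleGraph.edist_ne_top_iff_reachable.mpr (hconn u v)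
  have hdle : ∀ τ, G.dist σ₀ τ ≤ D := fun τ => hD ▸ SimpleGraph.dist_le_diam hediam
  have huniv : (Finset.univ : Finset {s : Finset (Fin n) // s.card = d}) =
      (Finset.range (D + 1)).biUnion S := by
    ext τ
    simp only [Finset.mem_univ, true_iff, Finset.mem_biUnion, Finset.mem_range, hS,
      Finset.mem_filter, true_and]
    exact ⟨G.dist σ₀ τ, by have := hdle τ; omega, rfl⟩
  have hcard : Fintype.card {s : Finset (Fin n) // s.card = d}
      = ∑ k ∈ Finset.range (D + 1), (S k).card := by
    rw [← Finset.card_univ, huniv, Finset.card_biUnion]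
    intro x hx y hy hxy
    rw [Function.onFun, Finset.disjoint_left]
    intro τ hτx hτy
    simp only [hS, Finset.mem_filter, Finset.mem_univ, true_and] at hτx hτy
    exact hxy (by omega)
  have hcardV : Fintype.card {s : Finset (Fin n) // s.card = d} = n.choose d := by
    rw [Fintype.card_subtype]
    have he : Finset.univ.filter (fun s : Finset (Fin n) => s.card = d)
        = (Finset.univ : Finset (Fin n)).powersetCard d := by
      ext s
      simp [Finset.mem_powersetCard, Finset.subset_univ]
    rw [he, Finset.card_powersetCard, Finset.card_univ, Fintype.card_fin]
  -- natural number bound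
  have hN : n.choose d ≤ 1 + ∑ j ∈ Finset.range D, r * d * q ^ j := by
    rw [← hcardV, hcard, Finset.sum_range_succ']
    have := Finset.sum_le_sum (fun j (_ : j ∈ Finset.range D) => hsphere j)
    omega
  -- pass to the reals
  have h1r : 1 ≤ r := by omega
  have hcast : ((q : ℕ) : ℝ) = ((r : ℝ) - 1) * d := by
    rw [hq, Nat.cast_mul, Nat.cast_sub h1r, Nat.cast_one]
  set x : ℝ := ((r : ℝ) - 1) * d with hx
  have hx2 : (2 : ℝ) ≤ x := by rw [← hcast]; exact_mod_cast hrd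
  have hx1 : x ≠ 1 := by linarith
  have hgeom : ∑ j ∈ Finset.range D, x ^ j = (x ^ D - 1) / (x - 1) := geom_sum_eq hx1 D
  have hfinal : ((1 + ∑ j ∈ Finset.range D, r * d * q ^ j : ℕ) : ℝ)
      = 1 + (r : ℝ) * d * (x ^ D - 1) / (x - 1) := by
    push_cast [hcast]
    rw [← Finset.mul_sum, hgeom]
    ring
  calc ((n.choose d : ℝ)) ≤ ((1 + ∑ j ∈ Finset.range D, r * d * q ^ j : ℕ) : ℝ) := by
        exact_mod_cast hN
    _ = _ := hfinal
end

section
/- Let n, d be positive integers with d + 1 ≤ n, let X^d be a set of (d+1)-element subsets of {1,…,n}, and suppose the adjacency graph G is connected and every (d−1)-simplex has degree exactly r, where r ≥ 2 and (r−1)·d ≥ 2. If D is the diameter of G and N = C(n,d), then D ≥ log(1 + (N − 1)·((r−1)·d − 1)/(r·d)) / log((r−1)·d). -/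
/-- If `dist σ₀ v = k + 1` then `v` has a neighbor at distance `k` from `σ₀`. -/
lemma exists_adj_dist {V : Type*} (G : SimpleGraph V) (hc : G.Connected) (σ₀ v : V) (k : ℕ)
    (h : G.dist σ₀ v = k + 1) : ∃ u, G.Adj u v ∧ G.dist σ₀ u = k := by
  obtain ⟨p, hp⟩ := (hc σ₀ v).exists_walk_length_eq_dist
  have hne : v ≠ σ₀ := by
    rintro rfl
    rw [SimpleGraph.dist_self] at h; omega
  obtain ⟨u, hadj, q, hq⟩ := SimpleGraph.Walk.exists_eq_cons_of_ne hne p.reverse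
  have hlen : q.length = k := by
    have := congrArg SimpleGraph.Walk.length hq
    rw [SimpleGraph.Walk.length_reverse, SimpleGraph.Walk.length_cons, hp, h] at this
    omega
  refine ⟨u, hadj.symm, ?_⟩
  have h1 : G.dist σ₀ u ≤ k := by
    have := SimpleGraph.dist_le q.reverse
    rwa [SimpleGraph.Walk.length_reverse, hlen] at this
  have h2 : G.dist σ₀ v ≤ G.dist σ₀ u + G.dist u v := hc.dist_triangle
  have h3 : G.dist u v ≤ 1 := by
    have := SimpleGraph.dist_le (SimpleGraph.Walk.cons hadj.symm SimpleGraph.Walk.nil)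
    simpa using this
  omega

/-- Counting neighbors of `ρ` through pairs (simplex, removed vertex). -/
lemma adj_card_le (n d : ℕ) (Xd : Finset (Finset (Fin n)))
    (hXd : ∀ s ∈ Xd, s.card = d + 1)
    (ρ : {s : Finset (Fin n) // s.card = d}) (Q : {s : Finset (Fin n) // s.card = d} → Prop)
    [DecidablePred Q] [DecidableRel (simGraph n d Xd).Adj]
    (S : Finset (Finset (Fin n)))
    (hS : ∀ σ, (simGraph n d Xd).Adj ρ σ → Q σ → ρ.val ∪ σ.val ∈ S) :
    (Finset.univ.filter (fun σ => (simGraph n d Xd).Adj ρ σ ∧ Q σ)).card ≤ S.card * d := by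
  classical
  have hcard : (S ×ˢ ρ.val.powersetCard 1).card = S.card * d := by
    rw [Finset.card_product, Finset.card_powersetCard, ρ.prop, Nat.choose_one_right]
  rw [← hcard]
  apply Finset.card_le_card_of_injOn (fun σ => (ρ.val ∪ σ.val, ρ.val \ σ.val))
  · intro σ hσ
    simp only [Finset.mem_coe, Finset.mem_filter, Finset.mem_univ, true_and] at hσ ⊢
    obtain ⟨hadj, hQ⟩ := hσ
    have hmem : ρ.val ∪ σ.val ∈ Xd := hadj.2
    have hcardU : (ρ.val ∪ σ.val).card = d + 1 := hXd _ hmem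
    have hsub : σ.val ⊆ ρ.val ∪ σ.val := Finset.subset_union_right
    have h1 : ρ.val \ σ.val = (ρ.val ∪ σ.val) \ σ.val := by
      ext x
      simp only [Finset.mem_sdiff, Finset.mem_union]
      tauto
    rw [Finset.mem_product]
    refine ⟨hS σ hadj hQ, ?_⟩
    rw [Finset.mem_powersetCard]
    refine ⟨Finset.sdiff_subset, ?_⟩
    rw [h1, Finset.card_sdiff_of_subset hsub, hcardU, σ.prop]
    omega
  · intro σ _ σ' _ heq
    have h1 : ∀ τ : {s : Finset (Fin n) // s.card = d},
        τ.val = (ρ.val ∪ τ.val) \ (ρ.val \ τ.val) := by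
      intro τ
      ext x
      simp only [Finset.mem_sdiff, Finset.mem_union]
      tauto
    apply Subtype.ext
    rw [h1 σ, h1 σ',
      show ρ.val ∪ σ.val = ρ.val ∪ σ'.val from congrArg Prod.fst heq,
      show ρ.val \ σ.val = ρ.val \ σ'.val from congrArg Prod.snd heq]

/-- Main counting bound: `C(n,d) ≤ 1 + r·d · ∑_{j<D} ((r-1)·d)^j`. -/
lemma choose_le_moore (n d r : ℕ) (hr : 2 ≤ r) (hn : d + 1 ≤ n)
    (Xd : Finset (Finset (Fin n))) (hXd : ∀ s ∈ Xd, s.card = d + 1)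
    (hconn : (simGraph n d Xd).Connected)
    (hreg : ∀ σ, simDegree n d Xd σ = r) (D : ℕ) (hD : D = (simGraph n d Xd).diam) :
    n.choose d ≤ 1 + r * d * ∑ j ∈ Finset.range D, ((r - 1) * d) ^ j := by
  classical
  let G := simGraph n d Xd
  have hcardV : Fintype.card {s : Finset (Fin n) // s.card = d} = n.choose d := by
    rw [Fintype.card_finset_len, Fintype.card_fin]
  have hpos : 0 < Fintype.card {s : Finset (Fin n) // s.card = d} := by
    rw [hcardV]; exact Nat.choose_pos (by omega)
  have hne0 : Nonempty {s : Finset (Fin n) // s.card = d} := Fintype.card_pos_iff.mp hpos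
  obtain ⟨σ₀⟩ := hne0
  -- distance spheres
  set S : ℕ → Finset {s : Finset (Fin n) // s.card = d} := fun k => Finset.univ.filter (fun v => G.dist σ₀ v = k) with hSdef
  -- every vertex is within distance D
  haveI : Nonempty {s : Finset (Fin n) // s.card = d} := ⟨σ₀⟩
  have hediam : G.ediam ≠ ⊤ := by
    obtain ⟨u, v, huv⟩ := SimpleGraph.exists_edist_eq_ediam_of_finite (G := G)
    rw [← huv]
    exact SimpleGraph.edist_ne_top_iff_reachable.mpr (hconn u v)
  have hdistle : ∀ v : {s : Finset (Fin n) // s.card = d}, G.dist σ₀ v ≤ D := by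
    intro v; rw [hD]; exact SimpleGraph.dist_le_diam hediam
  -- S 0 has one element
  have hS0 : (S 0).card ≤ 1 := by
    have : S 0 ⊆ {σ₀} := by
      intro v hv
      simp only [hSdef, Finset.mem_filter] at hv
      have := (hconn.dist_eq_zero_iff (u := σ₀) (v := v)).mp hv.2
      simp [this]
    calc (S 0).card ≤ ({σ₀} : Finset {s : Finset (Fin n) // s.card = d}).card := Finset.card_le_card this
      _ = 1 := Finset.card_singleton _
  -- the sphere bound
  have hstep : ∀ k : ℕ, (S (k + 1)).card ≤ r * d * ((r - 1) * d) ^ k := by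
    intro k
    induction k with
    | zero =>
      -- neighbors of σ₀
      have hsub : S 1 ⊆ Finset.univ.filter (fun σ => G.Adj σ₀ σ ∧ True) := by
        intro v hv
        simp only [hSdef, Finset.mem_filter] at hv ⊢
        exact ⟨hv.1, (SimpleGraph.dist_eq_one_iff_adj).mp hv.2, trivial⟩
      have hb := adj_card_le n d Xd hXd σ₀ (fun _ => True)
        (Xd.filter (fun t => σ₀.val ⊆ t))
        (by
          intro σ hadj _
          rw [Finset.mem_filter]
          exact ⟨hadj.2, Finset.subset_union_left⟩)
      have hdeg : (Xd.filter (fun t => σ₀.val ⊆ t)).card = r := hreg σ₀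
      calc (S 1).card ≤ _ := Finset.card_le_card hsub
        _ ≤ (Xd.filter (fun t => σ₀.val ⊆ t)).card * d := hb
        _ = r * d := by rw [hdeg]
        _ = r * d * ((r - 1) * d) ^ 0 := by ring
    | succ k ih =>
      -- each vertex at distance k+2 is adjacent to one at distance k+1
      have hsub : S (k + 2) ⊆ (S (k + 1)).biUnion
          (fun ρ => Finset.univ.filter (fun σ => G.Adj ρ σ ∧ G.dist σ₀ σ = k + 2)) := by
        intro v hv
        simp only [hSdef, Finset.mem_filter] at hv
        obtain ⟨u, hadj, hu⟩ := exists_adj_dist G hconn σ₀ v (k + 1) hv.2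
        rw [Finset.mem_biUnion]
        exact ⟨u, by simp [hSdef, hu], by simp [hadj, hv.2]⟩
      -- each vertex at distance k+1 has at most (r-1)d such neighbors
      have hfib : ∀ ρ ∈ S (k + 1),
          (Finset.univ.filter (fun σ => G.Adj ρ σ ∧ G.dist σ₀ σ = k + 2)).card
            ≤ (r - 1) * d := by
        intro ρ hρ
        simp only [hSdef, Finset.mem_filter] at hρ
        obtain ⟨π, hπadj, hπ⟩ := exists_adj_dist G hconn σ₀ ρ k hρ.2
        set t₀ := ρ.val ∪ π.val with ht₀
        have ht₀mem : t₀ ∈ Xd.filter (fun t => ρ.val ⊆ t) := by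
          rw [Finset.mem_filter]
          refine ⟨?_, Finset.subset_union_left⟩
          rw [ht₀, Finset.union_comm]
          exact hπadj.2
        have hb := adj_card_le n d Xd hXd ρ (fun σ => G.dist σ₀ σ = k + 2)
          ((Xd.filter (fun t => ρ.val ⊆ t)).erase t₀)
          (by
            intro σ hadj hdist
            rw [Finset.mem_erase]
            constructor
            · -- ρ ∪ σ ≠ t₀
              intro habs
              -- σ and π are both d-subsets of the (d+1)-set t₀
              have hσt : σ.val ⊆ t₀ := habs ▸ Finset.subset_union_right
              have hπt : π.val ⊆ t₀ := Finset.subset_union_right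
              have hσπ : σ ≠ π := by
                intro h; rw [h, hπ] at hdist; omega
              have ht₀card : t₀.card = d + 1 := hXd _ (Finset.mem_filter.mp ht₀mem).1
              have hunion : σ.val ∪ π.val = t₀ := by
                apply Finset.eq_of_subset_of_card_le (Finset.union_subset hσt hπt)
                have h1 : σ.val ⊆ σ.val ∪ π.val := Finset.subset_union_left
                have hne : σ.val ∪ π.val ≠ σ.val := by
                  intro h
                  have hπσ : π.val ⊆ σ.val := by
                    rw [← h]; exact Finset.subset_union_right
                  have := Finset.eq_of_subset_of_card_le hπσ (by rw [σ.prop, π.prop])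
                  exact hσπ (Subtype.ext this.symm)
                have hlt : σ.val.card < (σ.val ∪ π.val).card :=
                  Finset.card_lt_card (Finset.ssubset_iff_subset_ne.mpr ⟨h1, Ne.symm hne⟩)
                rw [σ.prop] at hlt
                omega
              have hadjσπ : G.Adj π σ := by
                refine ⟨Ne.symm hσπ, ?_⟩
                rw [Finset.union_comm, hunion]
                exact (Finset.mem_filter.mp ht₀mem).1
              have : G.dist σ₀ σ ≤ G.dist σ₀ π + G.dist π σ := hconn.dist_triangle
              have h1 : G.dist π σ ≤ 1 := by
                have := SimpleGraph.dist_le (SimpleGraph.Walk.cons hadjσπ SimpleGraph.Walk.nil)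
                simpa using this
              rw [hdist, hπ] at this
              omega
            · rw [Finset.mem_filter]
              exact ⟨hadj.2, Finset.subset_union_left⟩)
        have hcard' : ((Xd.filter (fun t => ρ.val ⊆ t)).erase t₀).card = r - 1 := by
          have hdeg : (Xd.filter (fun t => ρ.val ⊆ t)).card = r := hreg ρ
          rw [Finset.card_erase_of_mem ht₀mem, hdeg]
        calc _ ≤ ((Xd.filter (fun t => ρ.val ⊆ t)).erase t₀).card * d := hb
          _ = (r - 1) * d := by rw [hcard']
      calc (S (k + 2)).card ≤ _ := Finset.card_le_card hsub
        _ ≤ ∑ ρ ∈ S (k + 1), (Finset.univ.filter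
              (fun σ => G.Adj ρ σ ∧ G.dist σ₀ σ = k + 2)).card := Finset.card_biUnion_le
        _ ≤ ∑ _ρ ∈ S (k + 1), (r - 1) * d := Finset.sum_le_sum hfib
        _ = (S (k + 1)).card * ((r - 1) * d) := by rw [Finset.sum_const, smul_eq_mul]
        _ ≤ (r * d * ((r - 1) * d) ^ k) * ((r - 1) * d) :=
            Nat.mul_le_mul_right _ ih
        _ = r * d * ((r - 1) * d) ^ (k + 1) := by ring
  -- sum up
  have hcover : (Finset.univ : Finset {s : Finset (Fin n) // s.card = d}) ⊆ (Finset.range (D + 1)).biUnion S := by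
    intro v _
    rw [Finset.mem_biUnion]
    exact ⟨G.dist σ₀ v, Finset.mem_range.mpr (by have := hdistle v; omega),
      by simp [hSdef]⟩
  calc n.choose d = (Finset.univ : Finset {s : Finset (Fin n) // s.card = d}).card := by rw [Finset.card_univ, hcardV]
    _ ≤ ((Finset.range (D + 1)).biUnion S).card := Finset.card_le_card hcover
    _ ≤ ∑ k ∈ Finset.range (D + 1), (S k).card := Finset.card_biUnion_le
    _ = (S 0).card + ∑ k ∈ Finset.range D, (S (k + 1)).card := by
        rw [Finset.sum_range_succ']
        ring
    _ ≤ 1 + ∑ k ∈ Finset.range D, r * d * ((r - 1) * d) ^ k := by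
        refine Nat.add_le_add ?_ (Finset.sum_le_sum (fun k _ => hstep k))
        · exact hS0
    _ = 1 + r * d * ∑ j ∈ Finset.range D, ((r - 1) * d) ^ j := by
        rw [Finset.mul_sum]

theorem stmt3 (n d r : ℕ) (hd : 0 < d) (hn : d + 1 ≤ n) (hr : 2 ≤ r)
    (hrd : 2 ≤ (r - 1) * d)
    (Xd : Finset (Finset (Fin n))) (hXd : ∀ s ∈ Xd, s.card = d + 1)
    (hconn : (simGraph n d Xd).Connected)
    (hreg : ∀ σ, simDegree n d Xd σ = r)
    (D : ℕ) (hD : D = (simGraph n d Xd).diam)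
    (N : ℝ) (hN : N = (n.choose d : ℝ)) :
    (D : ℝ) ≥
      Real.log (1 + (N - 1) * (((r : ℝ) - 1) * d - 1) / ((r : ℝ) * d)) /
        Real.log (((r : ℝ) - 1) * d) := by
  have hkey := choose_le_moore n d r hr hn Xd hXd hconn hreg D hD
  set b : ℕ := (r - 1) * d with hb
  have hbR : ((b : ℝ)) = ((r : ℝ) - 1) * d := by
    rw [hb]
    push_cast [Nat.cast_sub (by omega : 1 ≤ r)]
    ring
  have hb2 : (2 : ℝ) ≤ (b : ℝ) := by exact_mod_cast hrd
  have hrd0 : (0 : ℝ) < (r : ℝ) * d := by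
    have : 0 < r * d := Nat.mul_pos (by omega) hd
    exact_mod_cast this
  -- N ≤ 1 + r d * geom sum
  have hkeyR : N ≤ 1 + (r * d : ℝ) * ∑ j ∈ Finset.range D, (b : ℝ) ^ j := by
    rw [hN]
    have := hkey
    have hcast : ((1 + r * d * ∑ j ∈ Finset.range D, b ^ j : ℕ) : ℝ)
        = 1 + (r * d : ℝ) * ∑ j ∈ Finset.range D, (b : ℝ) ^ j := by
      push_cast
      ring
    calc ((n.choose d : ℝ)) ≤ ((1 + r * d * ∑ j ∈ Finset.range D, b ^ j : ℕ) : ℝ) := by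
          exact_mod_cast this
      _ = _ := hcast
  -- geometric sum identity
  have hgeom : ((b : ℝ) - 1) * ∑ j ∈ Finset.range D, (b : ℝ) ^ j = (b : ℝ) ^ D - 1 :=
    mul_geom_sum _ _
  have hmain : 1 + (N - 1) * ((b : ℝ) - 1) / ((r : ℝ) * d) ≤ (b : ℝ) ^ D := by
    have h1 : (N - 1) * ((b : ℝ) - 1) ≤ (r * d : ℝ) * ((b : ℝ) ^ D - 1) := by
      rw [← hgeom]
      have h2 : N - 1 ≤ (r * d : ℝ) * ∑ j ∈ Finset.range D, (b : ℝ) ^ j := by linarith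
      have h3 : (0 : ℝ) ≤ (b : ℝ) - 1 := by linarith
      calc (N - 1) * ((b : ℝ) - 1)
          ≤ ((r * d : ℝ) * ∑ j ∈ Finset.range D, (b : ℝ) ^ j) * ((b : ℝ) - 1) :=
            mul_le_mul_of_nonneg_right h2 h3
        _ = (r * d : ℝ) * (((b : ℝ) - 1) * ∑ j ∈ Finset.range D, (b : ℝ) ^ j) := by ring
    have h4 : (N - 1) * ((b : ℝ) - 1) / ((r : ℝ) * d) ≤ (b : ℝ) ^ D - 1 := by
      rw [div_le_iff₀ hrd0]
      calc (N - 1) * ((b : ℝ) - 1) ≤ (r * d : ℝ) * ((b : ℝ) ^ D - 1) := h1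
        _ = ((b : ℝ) ^ D - 1) * ((r : ℝ) * d) := by ring
    linarith
  have hlogb : 0 < Real.log (b : ℝ) := Real.log_pos (by linarith)
  have hN1 : (1 : ℝ) ≤ N := by
    rw [hN]
    exact_mod_cast Nat.one_le_iff_ne_zero.mpr (Nat.choose_pos (by omega : d ≤ n)).ne'
  have harg : (1 : ℝ) ≤ 1 + (N - 1) * ((b : ℝ) - 1) / ((r : ℝ) * d) := by
    have : 0 ≤ (N - 1) * ((b : ℝ) - 1) / ((r : ℝ) * d) := by
      apply div_nonneg
      · apply mul_nonneg <;> linarith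
      · linarith
    linarith
  rw [ge_iff_le, ← hbR, div_le_iff₀ hlogb]
  calc Real.log (1 + (N - 1) * ((b : ℝ) - 1) / ((r : ℝ) * d))
      ≤ Real.log ((b : ℝ) ^ D) := Real.log_le_log (by linarith) hmain
    _ = D * Real.log (b : ℝ) := by rw [Real.log_pow]
end
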